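/- A finite collection of multivariate Gaussian density functions on R^m with pairwise distinct (mean, covariance) pairs is linearly independent: if Σ_{k=1}^K γ_k N(z; μ_k, Σ_k) = 0 for all z ∈ R^m, where the pairs (μ_k, Σ_k) are distinct and each Σ_k is positive definite, then all γ_k = 0. -/

import Mathlib

open MeasureTheory Matrix

section Aux

open Filter

private lemma eval_quadLin {m : ℕ} (M : Matrix (Fin m) (Fin m) ℝ) (u : Fin m → ℝ) (v : Fin m → ℝ) :
    MvPolynomial.eval v (∑ a, ∑ b, MvPolynomial.C (M a b) * MvPolynomial.X a * MvPolynomial.X b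
      + ∑ a, MvPolynomial.C (u a) * MvPolynomial.X a)
    = v ⬝ᵥ M.mulVec v + u ⬝ᵥ v := by
  simp [dotProduct, mulVec, Finset.mul_sum]
  congr 1
  ext a
  exact Finset.sum_congr rfl fun b _ => by ring

private lemma exists_common_nonvanish {m : ℕ} {ι : Type*} (s : Finset ι)
    (M : ι → Matrix (Fin m) (Fin m) ℝ) (u : ι → Fin m → ℝ)
    (h : ∀ i ∈ s, ∃ v : Fin m → ℝ, v ⬝ᵥ (M i).mulVec v + (u i) ⬝ᵥ v ≠ 0) :
    ∃ v : Fin m → ℝ, ∀ i ∈ s, v ⬝ᵥ (M i).mulVec v + (u i) ⬝ᵥ v ≠ 0 := by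
  set P : ι → MvPolynomial (Fin m) ℝ := fun i =>
    ∑ a, ∑ b, MvPolynomial.C (M i a b) * MvPolynomial.X a * MvPolynomial.X b
      + ∑ a, MvPolynomial.C (u i a) * MvPolynomial.X a with hP
  have hPne : ∀ i ∈ s, P i ≠ 0 := by
    intro i hi hzero
    obtain ⟨v, hv⟩ := h i hi
    apply hv
    rw [← eval_quadLin (M i) (u i) v, show (∑ a, ∑ b, MvPolynomial.C (M i a b) * MvPolynomial.X a * MvPolynomial.X b
      + ∑ a, MvPolynomial.C (u i a) * MvPolynomial.X a) = P i from rfl, hzero]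
    simp
  have hprod : ∏ i ∈ s, P i ≠ 0 := Finset.prod_ne_zero_iff.2 hPne
  have : ∃ v : Fin m → ℝ, MvPolynomial.eval v (∏ i ∈ s, P i) ≠ 0 := by
    by_contra hc
    push_neg at hc
    exact hprod (MvPolynomial.funext (q := 0) (by simpa using hc))
  obtain ⟨v, hv⟩ := this
  rw [map_prod] at hv
  refine ⟨v, fun i hi => ?_⟩
  rw [← eval_quadLin (M i) (u i) v]
  exact Finset.prod_ne_zero_iff.1 hv i hi

private lemma quad_witness {m : ℕ} {M : Matrix (Fin m) (Fin m) ℝ} (hsymm : Mᵀ = M) (hM : M ≠ 0)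
    (h : ∀ v : Fin m → ℝ, v ⬝ᵥ M.mulVec v = 0) : False := by
  apply hM
  ext i j
  have hdiag : ∀ i, M i i = 0 := by
    intro i
    have := h (Pi.single i 1)
    simpa [dotProduct, mulVec, Pi.single_apply] using this
  have hij : M j i = M i j := by
    have := congrFun (congrFun hsymm j) i
    simpa using this.symm
  have := h (Pi.single i 1 + Pi.single j 1)
  by_cases hne : i = j
  · simp [hne, hdiag]
  · simp [dotProduct, mulVec, Pi.single_apply, Finset.sum_add_distrib, mul_add, add_mul,
      Finset.sum_ite_eq, hne, hdiag] at this
    simp only [Matrix.zero_apply]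
    linarith [this, hij]

private lemma vec_witness {m : ℕ} {u : Fin m → ℝ} (hu : u ≠ 0) : ∃ v : Fin m → ℝ, u ⬝ᵥ v ≠ 0 :=
  ⟨u, fun hc => hu (by simpa using (dotProduct_self_eq_zero).1 hc)⟩

private lemma tendsto_exp_quad_zero (a b : ℝ) (h : 0 < a ∨ (a = 0 ∧ b < 0)) :
    Tendsto (fun t : ℝ => Real.exp (-(a/2) * t^2 + b * t)) atTop (nhds 0) := by
  apply Real.tendsto_exp_atBot.comp
  rcases h with ha | ⟨ha, hb⟩
  · have hg : Tendsto (fun t : ℝ => -(a/2) * t + b) atTop atBot :=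
      (tendsto_id.const_mul_atTop_of_neg (by linarith)).atBot_add tendsto_const_nhds
    have h2 : Tendsto (fun t : ℝ => t * (-(a/2) * t + b)) atTop atBot :=
      Tendsto.atTop_mul_atBot₀ tendsto_id hg
    exact h2.congr (fun t => by ring)
  · subst ha
    have h2 : Tendsto (fun t : ℝ => b * t) atTop atBot :=
      tendsto_id.const_mul_atTop_of_neg hb
    exact h2.congr (fun t => by ring)

private lemma indep_1d {ι : Type*} [DecidableEq ι] (T : Finset ι) (hT : T.Nonempty) (α β d : ι → ℝ)
    (hd : ∀ k ∈ T, d k ≠ 0)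
    (hsep : ∀ k ∈ T, ∀ k' ∈ T, k ≠ k' → α k ≠ α k' ∨ β k ≠ β k')
    (hzero : ∀ t : ℝ, ∑ k ∈ T, d k * Real.exp (-(α k / 2) * t ^ 2 + β k * t) = 0) :
    False := by
  obtain ⟨k₁, hk₁T, hk₁min⟩ := Finset.exists_min_image T α hT
  set T' := T.filter (fun k => α k = α k₁) with hT'
  have hT'ne : T'.Nonempty := ⟨k₁, by simp [hT', hk₁T]⟩
  obtain ⟨k₀, hk₀T', hk₀max⟩ := Finset.exists_max_image T' β hT'ne
  have hk₀T : k₀ ∈ T := (Finset.mem_filter.1 hk₀T').1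
  have hk₀α : α k₀ = α k₁ := (Finset.mem_filter.1 hk₀T').2
  have hkey : ∀ k ∈ T, k ≠ k₀ → 0 < α k - α k₀ ∨ (α k - α k₀ = 0 ∧ β k - β k₀ < 0) := by
    intro k hk hne
    rcases lt_or_eq_of_le (hk₀α ▸ hk₁min k hk) with hlt | heq
    · left; linarith
    · right
      refine ⟨by linarith, ?_⟩
      have hkT' : k ∈ T' := Finset.mem_filter.2 ⟨hk, by linarith⟩
      have hle : β k ≤ β k₀ := hk₀max k hkT'
      rcases hsep k hk k₀ hk₀T hne with h | h
      · exact absurd (by linarith : α k = α k₀) h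
      · cases lt_or_eq_of_le hle with
        | inl h2 => linarith
        | inr h2 => exact absurd h2 h
  set F : ι → ℝ → ℝ := fun k t =>
    d k * Real.exp (-((α k - α k₀) / 2) * t ^ 2 + (β k - β k₀) * t) with hF
  have hFzero : ∀ t : ℝ, ∑ k ∈ T, F k t = 0 := by
    intro t
    have : ∑ k ∈ T, F k t
        = Real.exp ((α k₀ / 2) * t ^ 2 - β k₀ * t) *
          ∑ k ∈ T, d k * Real.exp (-(α k / 2) * t ^ 2 + β k * t) := by
      rw [Finset.mul_sum]
      refine Finset.sum_congr rfl fun k _ => ?_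
      rw [hF]
      simp only []
      rw [mul_comm (Real.exp _) _, mul_assoc, ← Real.exp_add]
      congr 2
      ring
    rw [this, hzero t, mul_zero]
  have hlim : Filter.Tendsto (fun t => ∑ k ∈ T, F k t) Filter.atTop
      (nhds (∑ k ∈ T, if k = k₀ then d k₀ else 0)) := by
    refine tendsto_finset_sum T fun k hk => ?_
    by_cases hne : k = k₀
    · subst hne
      simp only [if_pos rfl, hF, sub_self]
      exact tendsto_const_nhds.congr fun t => by norm_num
    · simp only [if_neg hne, hF]
      have := (tendsto_exp_quad_zero (α k - α k₀) (β k - β k₀) (hkey k hk hne)).const_mul (d k)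
      simpa using this
  have hsum : (∑ k ∈ T, if k = k₀ then d k₀ else 0) = d k₀ := by
    rw [Finset.sum_ite_eq' T k₀ (fun _ => d k₀)]
    simp [hk₀T]
  rw [hsum] at hlim
  have hzeroLim : Filter.Tendsto (fun t => ∑ k ∈ T, F k t) Filter.atTop (nhds 0) := by
    simp only [hFzero]; exact tendsto_const_nhds
  exact hd k₀ hk₀T (tendsto_nhds_unique hlim hzeroLim)

private lemma dot_symm {m : ℕ} {M : Matrix (Fin m) (Fin m) ℝ} (hs : Mᵀ = M) (x y : Fin m → ℝ) :
    x ⬝ᵥ M *ᵥ y = y ⬝ᵥ M *ᵥ x := by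
  rw [dotProduct_mulVec, ← mulVec_transpose, hs, dotProduct_comm]

end Aux

/-- The multivariate Gaussian density on `ι → ℝ` with mean `μ` and
(positive definite) covariance matrix `S`. -/
noncomputable def gaussianPDF {ι : Type*} [Fintype ι] [DecidableEq ι]
    (μ : ι → ℝ) (S : Matrix ι ι ℝ) (z : ι → ℝ) : ℝ :=
  Real.exp (-(1 / 2) * ((z - μ) ⬝ᵥ S⁻¹.mulVec (z - μ))) /
    Real.sqrt ((2 * Real.pi) ^ Fintype.card ι * S.det)

/-- finitely many multivariate Gaussian densities with pairwise
distinct (mean, covariance) pairs are linearly independent. -/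
theorem stmt2 {m K : ℕ} (μ : Fin K → Fin m → ℝ) (S : Fin K → Matrix (Fin m) (Fin m) ℝ)
    (hpd : ∀ k, (S k).PosDef)
    (hdist : ∀ k k', k ≠ k' → μ k ≠ μ k' ∨ S k ≠ S k')
    (γ : Fin K → ℝ)
    (hzero : ∀ z : Fin m → ℝ, ∑ k, γ k * gaussianPDF (μ k) (S k) z = 0) :
    ∀ k, γ k = 0 := by
  classical
  intro k₂
  by_contra hγ
  set A : Fin K → Matrix (Fin m) (Fin m) ℝ := fun k => (S k)⁻¹ with hA
  have hApd : ∀ k, (A k).PosDef := fun k => (hpd k).inv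
  have hAsymm : ∀ k, (A k)ᵀ = A k := fun k => (hApd k).isHermitian
  set N : Fin K → ℝ := fun k => Real.sqrt ((2 * Real.pi) ^ m * (S k).det) with hN
  have hNpos : ∀ k, 0 < N k := by
    intro k
    apply Real.sqrt_pos.2
    exact mul_pos (pow_pos (by positivity) m) (hpd k).det_pos
  set T : Finset (Fin K) := Finset.univ.filter (fun k => γ k ≠ 0) with hT
  have hTne : T.Nonempty := ⟨k₂, by simp [hT, hγ]⟩
  -- A is injective where S is distinct
  have hAinj : ∀ k k', A k = A k' → S k = S k' := by
    intro k k' h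
    have h1 : ((S k)⁻¹)⁻¹ = ((S k')⁻¹)⁻¹ := by rw [show (S k)⁻¹ = A k from rfl, h]
    rwa [Matrix.nonsing_inv_nonsing_inv _ (hpd k).det_pos.ne'.isUnit,
      Matrix.nonsing_inv_nonsing_inv _ (hpd k').det_pos.ne'.isUnit] at h1
  -- choose the direction v
  set s : Finset (Fin K × Fin K) :=
    (Finset.univ : Finset (Fin K × Fin K)).filter (fun p => p.1 ∈ T ∧ p.2 ∈ T ∧ p.1 ≠ p.2) with hs
  set Mp : Fin K × Fin K → Matrix (Fin m) (Fin m) ℝ :=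
    fun p => if S p.1 = S p.2 then 0 else A p.1 - A p.2 with hMp
  set up : Fin K × Fin K → Fin m → ℝ :=
    fun p => if S p.1 = S p.2 then (A p.1).mulVec (μ p.1 - μ p.2) else 0 with hup
  have hwit : ∀ p ∈ s, ∃ v : Fin m → ℝ, v ⬝ᵥ (Mp p).mulVec v + (up p) ⬝ᵥ v ≠ 0 := by
    intro p hp
    obtain ⟨-, -, hne⟩ := (Finset.mem_filter.1 hp).2
    by_cases hSS : S p.1 = S p.2
    · -- means must differ; u = A (μ₁ - μ₂) ≠ 0
      have hμ : μ p.1 ≠ μ p.2 := by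
        rcases hdist p.1 p.2 hne with h | h
        · exact h
        · exact absurd hSS h
      have hd : μ p.1 - μ p.2 ≠ 0 := sub_ne_zero.2 hμ
      have hu : (A p.1).mulVec (μ p.1 - μ p.2) ≠ 0 := by
        intro hc
        have := (hApd p.1).dotProduct_mulVec_pos (x := μ p.1 - μ p.2) hd
        rw [hc] at this
        simp at this
      obtain ⟨v, hv⟩ := vec_witness hu
      refine ⟨v, ?_⟩
      simp only [hMp, hup, if_pos hSS]
      simpa [dotProduct_comm] using hv
    · -- matrices differ
      have hMne : A p.1 - A p.2 ≠ 0 := by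
        intro hc
        exact hSS (hAinj _ _ (sub_eq_zero.1 hc))
      have hsymm : (A p.1 - A p.2)ᵀ = A p.1 - A p.2 := by
        rw [Matrix.transpose_sub, hAsymm, hAsymm]
      have : ¬ ∀ v : Fin m → ℝ, v ⬝ᵥ (A p.1 - A p.2).mulVec v = 0 :=
        fun h => quad_witness hsymm hMne h
      push_neg at this
      obtain ⟨v, hv⟩ := this
      refine ⟨v, ?_⟩
      simp only [hMp, hup, if_neg hSS]
      simpa using hv
  obtain ⟨v, hv⟩ := exists_common_nonvanish s Mp up hwit
  -- the 1-dimensional data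
  set α : Fin K → ℝ := fun k => v ⬝ᵥ (A k).mulVec v with hα
  set β : Fin K → ℝ := fun k => v ⬝ᵥ (A k).mulVec (μ k) with hβ
  set c : Fin K → ℝ := fun k => (μ k) ⬝ᵥ (A k).mulVec (μ k) with hc
  set d : Fin K → ℝ := fun k => γ k * Real.exp (-(c k) / 2) / N k with hd
  have hdne : ∀ k ∈ T, d k ≠ 0 := by
    intro k hk
    have hγk : γ k ≠ 0 := (Finset.mem_filter.1 hk).2
    have := (hNpos k).ne'
    simp only [hd]
    positivity
  have hsep : ∀ k ∈ T, ∀ k' ∈ T, k ≠ k' → α k ≠ α k' ∨ β k ≠ β k' := by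
    intro k hk k' hk' hne
    have hps : (k, k') ∈ s := Finset.mem_filter.2 ⟨Finset.mem_univ _, hk, hk', by simpa using hne⟩
    have hv' := hv (k, k') hps
    by_cases hSS : S k = S k'
    · right
      intro hββ
      apply hv'
      simp only [hMp, hup, if_pos hSS]
      have hAA : A k = A k' := by rw [hA]; simp only; rw [hSS]
      have : (A k).mulVec (μ k - μ k') ⬝ᵥ v = β k - β k' := by
        rw [dotProduct_comm, hβ]
        simp only
        rw [Matrix.mulVec_sub, dotProduct_sub, hAA]
      rw [this, hββ]
      simp
    · left
      intro hαα
      apply hv'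
      simp only [hMp, hup, if_neg hSS]
      have : v ⬝ᵥ (A k - A k').mulVec v = α k - α k' := by
        rw [Matrix.sub_mulVec, dotProduct_sub]
      rw [this, hαα]
      simp
  -- the restricted identity
  have h1d : ∀ t : ℝ, ∑ k ∈ T, d k * Real.exp (-(α k / 2) * t ^ 2 + β k * t) = 0 := by
    intro t
    have hz := hzero (t • v)
    have hTsum : ∑ k ∈ T, γ k * gaussianPDF (μ k) (S k) (t • v)
        = ∑ k, γ k * gaussianPDF (μ k) (S k) (t • v) := by
      apply Finset.sum_subset (Finset.subset_univ T)
      intro k _ hk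
      have : γ k = 0 := by
        by_contra hc'
        exact hk (Finset.mem_filter.2 ⟨Finset.mem_univ _, hc'⟩)
      rw [this, zero_mul]
    rw [← hTsum] at hz
    rw [← hz]
    refine Finset.sum_congr rfl fun k _ => ?_
    have hQ : (t • v - μ k) ⬝ᵥ (A k).mulVec (t • v - μ k)
        = α k * t ^ 2 - 2 * β k * t + c k := by
      show (t • v - μ k) ⬝ᵥ (A k).mulVec (t • v - μ k)
          = (v ⬝ᵥ (A k).mulVec v) * t ^ 2 - 2 * (v ⬝ᵥ (A k).mulVec (μ k)) * t
            + μ k ⬝ᵥ (A k).mulVec (μ k)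
      simp only [Matrix.mulVec_sub, dotProduct_sub, sub_dotProduct, Matrix.mulVec_smul,
        dotProduct_smul, smul_dotProduct, smul_eq_mul]
      rw [dot_symm (hAsymm k) (μ k) v]
      ring
    rw [gaussianPDF, show (S k)⁻¹ = A k from rfl, hQ]
    have hcard : Fintype.card (Fin m) = m := Fintype.card_fin m
    rw [hcard, show Real.sqrt ((2 * Real.pi) ^ m * (S k).det) = N k from rfl]
    show γ k * Real.exp (-(c k) / 2) / N k * Real.exp (-(α k / 2) * t ^ 2 + β k * t)
        = γ k * (Real.exp (-(1 / 2) * (α k * t ^ 2 - 2 * β k * t + c k)) / N k)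
    rw [div_mul_eq_mul_div, mul_assoc, ← Real.exp_add, mul_div_assoc]
    have : -(c k) / 2 + (-(α k / 2) * t ^ 2 + β k * t)
        = -(1 / 2) * (α k * t ^ 2 - 2 * β k * t + c k) := by ring
    rw [this]
  exact absurd (indep_1d T hTne α β d hdne hsep h1d) (fun h => h)
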